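/- Assume β > 0 and let δ ∈ (0,1] satisfy (max_{1≤i≤m} γ_i/μ_i - 1)⁺ δ ≤ 1. Then for every p > 1, every x ∈ K₋, and every u ∈ Δ, ⟨b(x,u), ∇V_p(x)⟩ ≤ p (δβ + (m/2)(1+δ) - δ‖x‖₁) V_{p-1}(x), where ‖x‖₁ = ∑_i |x_i|. -/

import Mathlib

open scoped BigOperators

noncomputable section

/-- The piecewise function `ψ` from Definition 1 of the paper. -/
def psi (t : ℝ) : ℝ :=
  if t ≤ -1 then -(1/2)
  else if t ≤ 0 then (t+1)^3 - (1/2)*(t+1)^4 - 1/2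
  else t

/-- `Ψ(x) = ∑ i, ψ(x_i)/μ_i`. -/
def Psi (m : ℕ) (μ : Fin m → ℝ) (x : Fin m → ℝ) : ℝ := ∑ i, psi (x i) / μ i

/-- The Lyapunov function `V_p(x) = (δ Ψ(-x) + Ψ(x) + m / min_i μ_i)^p`. -/
def Vp (m : ℕ) (μ : Fin m → ℝ) (δ p : ℝ) (x : Fin m → ℝ) : ℝ :=
  (δ * Psi m μ (-x) + Psi m μ x + (m : ℝ) / ⨅ i, μ i) ^ p

/-- The drift `b(x,u) = -(β/m) M e - M (x - ⟨e,x⟩⁺ u) - ⟨e,x⟩⁺ Γ u`, written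
componentwise, where `M = diag(μ)` and `Γ = diag(γ)`. -/
def drift (m : ℕ) (μ γ : Fin m → ℝ) (β : ℝ) (x u : Fin m → ℝ) : Fin m → ℝ :=
  fun i => -(β / (m : ℝ)) * μ i - μ i * (x i - max (∑ j, x j) 0 * u i)
    - max (∑ j, x j) 0 * (γ i * u i)

/-! ### Auxiliary material on `psi` -/

open Set

/-- The derivative of `psi`. -/
def psi' (t : ℝ) : ℝ :=
  if t ≤ -1 then 0
  else if t ≤ 0 then 3*(t+1)^2 - 2*(t+1)^3
  else 1

lemma psi_of_le {t : ℝ} (h : t ≤ -1) : psi t = -(1/2) := if_pos h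

lemma psi_of_mem {t : ℝ} (h1 : -1 ≤ t) (h2 : t ≤ 0) :
    psi t = (t+1)^3 - (1/2)*(t+1)^4 - 1/2 := by
  unfold psi
  split_ifs with ha _
  · have : t = -1 := le_antisymm ha h1
    subst this; norm_num
  · rfl

lemma psi_of_nonneg {t : ℝ} (h : 0 ≤ t) : psi t = t := by
  unfold psi
  split_ifs with ha hb
  · linarith
  · have : t = 0 := le_antisymm hb h
    subst this; norm_num
  · rfl

lemma psi'_nonneg (t : ℝ) : 0 ≤ psi' t := by
  unfold psi'
  split_ifs with h1 h2
  · exact le_refl _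
  · push_neg at h1
    nlinarith [mul_nonneg (sq_nonneg (t+1)) (by linarith : (0:ℝ) ≤ 1 - 2*t)]
  · norm_num

lemma psi'_le_one (t : ℝ) : psi' t ≤ 1 := by
  unfold psi'
  split_ifs with h1 h2
  · norm_num
  · push_neg at h1
    nlinarith [mul_nonneg (sq_nonneg t) (by linarith : (0:ℝ) ≤ 3 + 2*t)]
  · exact le_refl _

lemma psi'_of_le {t : ℝ} (h : t ≤ -1) : psi' t = 0 := if_pos h

lemma psi'_of_nonneg {t : ℝ} (h : 0 ≤ t) : psi' t = 1 := by
  unfold psi'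
  split_ifs with ha hb
  · linarith
  · have : t = 0 := le_antisymm hb h
    subst this; norm_num
  · rfl

lemma psi'_of_mem {t : ℝ} (h1 : -1 < t) (h2 : t ≤ 0) :
    psi' t = 3*(t+1)^2 - 2*(t+1)^3 := by
  unfold psi'; rw [if_neg (by linarith), if_pos h2]

lemma psi_ge (t : ℝ) : -(1/2) ≤ psi t := by
  unfold psi
  split_ifs with h1 h2
  · exact le_refl _
  · push_neg at h1
    nlinarith [mul_nonneg (mul_nonneg (mul_nonneg (by linarith : (0:ℝ) ≤ t+1)
      (by linarith : (0:ℝ) ≤ t+1)) (by linarith : (0:ℝ) ≤ t+1)) (by linarith : (0:ℝ) ≤ 1 - t)]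
  · push_neg at h2; linarith

lemma hasDerivAt_g2 (s : ℝ) :
    HasDerivAt (fun t : ℝ => (t+1)^3 - (1/2)*(t+1)^4 - 1/2) (3*(s+1)^2 - 2*(s+1)^3) s := by
  have h1 : HasDerivAt (fun t : ℝ => t + 1) 1 s := (hasDerivAt_id s).add_const 1
  have h3 := h1.pow 3
  have h4 := h1.pow 4
  have := ((h3.sub (h4.const_mul (1/2 : ℝ))).sub_const (1/2 : ℝ))
  refine this.congr_deriv ?_
  norm_num
  ring

lemma hasDerivAt_psi (t : ℝ) : HasDerivAt psi (psi' t) t := by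
  rcases lt_trichotomy t (-1) with h | h | h
  · rw [psi'_of_le h.le]
    exact (hasDerivAt_const t (-(1/2):ℝ)).congr_of_eventuallyEq
      (Filter.eventuallyEq_of_mem (Iio_mem_nhds h) (fun y hy => psi_of_le (le_of_lt hy)))
  · subst h
    rw [psi'_of_le le_rfl]
    have hA : HasDerivWithinAt psi 0 (Iic (-1 : ℝ)) (-1) :=
      (hasDerivWithinAt_const (-1) _ (-(1/2):ℝ)).congr
        (fun y hy => psi_of_le hy) (psi_of_le le_rfl)
    have hg : HasDerivAt (fun t : ℝ => (t+1)^3 - (1/2)*(t+1)^4 - 1/2) 0 (-1) := by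
      convert hasDerivAt_g2 (-1) using 1; norm_num
    have hB : HasDerivWithinAt psi 0 (Icc (-1 : ℝ) 0) (-1) :=
      hg.hasDerivWithinAt.congr (fun y hy => psi_of_mem hy.1 hy.2)
        (psi_of_mem le_rfl (by norm_num))
    have := hA.union hB
    rw [Iic_union_Icc_eq_Iic (by norm_num : (-1:ℝ) ≤ 0)] at this
    exact this.hasDerivAt (Iic_mem_nhds (by norm_num))
  · rcases lt_trichotomy t 0 with h0 | h0 | h0
    · rw [psi'_of_mem h h0.le]
      exact (hasDerivAt_g2 t).congr_of_eventuallyEq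
        (Filter.eventuallyEq_of_mem (Ioo_mem_nhds h h0)
          (fun y hy => psi_of_mem hy.1.le hy.2.le))
    · subst h0
      rw [psi'_of_nonneg le_rfl]
      have hg : HasDerivAt (fun t : ℝ => (t+1)^3 - (1/2)*(t+1)^4 - 1/2) 1 0 := by
        convert hasDerivAt_g2 0 using 1; norm_num
      have hA : HasDerivWithinAt psi 1 (Icc (-1 : ℝ) 0) 0 :=
        hg.hasDerivWithinAt.congr (fun y hy => psi_of_mem hy.1 hy.2)
          (psi_of_mem (by norm_num) le_rfl)
      have hB : HasDerivWithinAt psi 1 (Ici (0:ℝ)) 0 :=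
        (hasDerivAt_id (0:ℝ)).hasDerivWithinAt.congr
          (fun y hy => psi_of_nonneg hy) (psi_of_nonneg le_rfl)
      have := hA.union hB
      rw [Icc_union_Ici_eq_Ici (by norm_num : (-1:ℝ) ≤ 0)] at this
      exact this.hasDerivAt (Ici_mem_nhds (by norm_num))
    · rw [psi'_of_nonneg h0.le]
      exact (hasDerivAt_id t).congr_of_eventuallyEq
        (Filter.eventuallyEq_of_mem (Ioi_mem_nhds h0)
          (fun y hy => psi_of_nonneg (le_of_lt hy)))

/-! ### Key pointwise inequality -/

lemma key_poly {s : ℝ} (h0 : 0 ≤ s) (h1 : s ≤ 1) :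
    s * (3*(1-s)^2 - 2*(1-s)^3) ≤ 1/2 := by
  nlinarith [sq_nonneg (s - 3/4), sq_nonneg s, sq_nonneg (1-s), sq_nonneg (s*(1-s)),
    mul_nonneg h0 (sub_nonneg.2 h1), sq_nonneg (s - 1/2), sq_nonneg (s^2 - s + 1/4)]

lemma key (δ a t : ℝ) (hδ0 : 0 ≤ δ) (hδ1 : δ ≤ 1) (ha : 0 ≤ a) :
    -(a + t) * (psi' t - δ * psi' (-t)) ≤ δ * a + (1+δ)/2 - δ * |t| := by
  have P0 := psi'_nonneg t
  have P1 := psi'_le_one t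
  have Q0 := psi'_nonneg (-t)
  have Q1 := psi'_le_one (-t)
  have core : -t * psi' t + δ * (t * psi' (-t)) ≤ (1+δ)/2 - δ * |t| := by
    rcases le_or_gt 0 t with ht | ht
    · rw [abs_of_nonneg ht, psi'_of_nonneg ht]
      rcases le_or_gt 1 t with ht1 | ht1
      · rw [psi'_of_le (by linarith : -t ≤ -1)]
        nlinarith [mul_nonneg (sub_nonneg.2 hδ1) ht]
      · have hkp := key_poly ht ht1.le
        nlinarith [mul_nonneg (mul_nonneg (sub_nonneg.2 hδ1) ht)
            (psi'_nonneg (-t)), mul_nonneg (sub_nonneg.2 hδ1) ht,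
          psi'_of_mem (by linarith : (-1:ℝ) < -t) (by linarith : -t ≤ 0)]
    · rw [abs_of_neg ht, psi'_of_nonneg (by linarith : (0:ℝ) ≤ -t)]
      rcases le_or_gt t (-1) with ht1 | ht1
      · rw [psi'_of_le ht1]; nlinarith
      · rw [psi'_of_mem ht1 ht.le]
        have hkp := key_poly (by linarith : (0:ℝ) ≤ -t) (by linarith : -t ≤ 1)
        nlinarith
  nlinarith [mul_nonneg ha P0, mul_nonneg (mul_nonneg ha hδ0) (sub_nonneg.2 Q1)]

/-! ### Differentiability of `Vp` -/

lemma sum_rep (m : ℕ) (μ : Fin m → ℝ) (δ : ℝ) (y : Fin m → ℝ) :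
    δ * Psi m μ (-y) + Psi m μ y = ∑ i, (δ * psi (-(y i)) + psi (y i)) / μ i := by
  rw [Psi, Psi, Finset.mul_sum, ← Finset.sum_add_distrib]
  exact Finset.sum_congr rfl (fun i _ => by rw [Pi.neg_apply]; ring)

lemma hasFDerivAt_Vp (m : ℕ) (μ : Fin m → ℝ) (δ p : ℝ) (hp : 1 ≤ p) (x : Fin m → ℝ) :
    HasFDerivAt (Vp m μ δ p)
      ((p * (δ * Psi m μ (-x) + Psi m μ x + (m : ℝ) / ⨅ i, μ i) ^ (p-1)) •
        ∑ i, ((δ * (-psi' (-(x i))) + psi' (x i)) / μ i) •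
          (ContinuousLinearMap.proj i : (Fin m → ℝ) →L[ℝ] ℝ)) x := by
  have hF : HasFDerivAt
      (fun y : Fin m → ℝ => δ * Psi m μ (-y) + Psi m μ y + (m : ℝ) / ⨅ i, μ i)
      (∑ i, ((δ * (-psi' (-(x i))) + psi' (x i)) / μ i) •
        (ContinuousLinearMap.proj i : (Fin m → ℝ) →L[ℝ] ℝ)) x := by
    have heq : (fun y : Fin m → ℝ => δ * Psi m μ (-y) + Psi m μ y + (m : ℝ) / ⨅ i, μ i)
        = fun y => (∑ i, (δ * psi (-(y i)) + psi (y i)) / μ i) + (m : ℝ) / ⨅ i, μ i := by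
      funext y; rw [sum_rep]
    rw [heq]
    apply HasFDerivAt.add_const
    apply HasFDerivAt.fun_sum
    intro i _
    have hneg : HasDerivAt (fun s : ℝ => psi (-s)) (-psi' (-(x i))) (x i) := by
      exact ((hasDerivAt_psi (-(x i))).comp (x i) (hasDerivAt_neg (x i))).congr_deriv (by ring)
    have hproj : HasFDerivAt (fun y : Fin m → ℝ => y i)
        (ContinuousLinearMap.proj i : (Fin m → ℝ) →L[ℝ] ℝ) x :=
      (ContinuousLinearMap.proj i : (Fin m → ℝ) →L[ℝ] ℝ).hasFDerivAt
    exact HasDerivAt.comp_hasFDerivAt x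
      (((hneg.const_mul δ).add (hasDerivAt_psi (x i))).div_const (μ i)) hproj
  have hrpow := Real.hasDerivAt_rpow_const
    (x := δ * Psi m μ (-x) + Psi m μ x + (m : ℝ) / ⨅ i, μ i) (p := p) (Or.inr hp)
  exact hrpow.comp_hasFDerivAt x hF

/-- Lemma 1, inequality on `K₋`: for `β > 0`, admissible `δ`, `p > 1`, `x ∈ K₋`,
`u ∈ Δ`: `⟨b(x,u), ∇V_p(x)⟩ ≤ p (δβ + (m/2)(1+δ) - δ‖x‖₁) V_{p-1}(x)`. -/
theorem stmt_5 (m : ℕ) (hm : 1 ≤ m) (μ γ : Fin m → ℝ)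
    (hμ : ∀ i, 0 < μ i) (hγ : ∀ i, 0 ≤ γ i)
    (β : ℝ) (hβ : 0 < β)
    (δ : ℝ) (hδ0 : 0 < δ) (hδ1 : δ ≤ 1)
    (hδγ : max ((⨆ i, γ i / μ i) - 1) 0 * δ ≤ 1)
    (p : ℝ) (hp : 1 < p)
    (x : Fin m → ℝ) (hx : ∑ i, x i ≤ 0)
    (u : Fin m → ℝ) (hu0 : ∀ i, 0 ≤ u i) (hu1 : ∑ i, u i = 1) :
    fderiv ℝ (Vp m μ δ p) x (drift m μ γ β x u) ≤
      p * (δ * β + (m : ℝ) / 2 * (1 + δ) - δ * ∑ i, |x i|) * Vp m μ δ (p - 1) x := by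
  have hm0 : (m : ℝ) ≠ 0 := Nat.cast_ne_zero.2 (by omega)
  have hmpos : (0 : ℝ) < m := by positivity
  haveI : Nonempty (Fin m) := ⟨⟨0, by omega⟩⟩
  -- positivity of the infimum
  have hc : 0 < ⨅ i, μ i := by
    obtain ⟨i0, hi0⟩ := Finite.exists_min μ
    exact lt_of_lt_of_le (hμ i0) (le_ciInf hi0)
  have hcle : ∀ i, (⨅ j, μ j) ≤ μ i :=
    fun i => ciInf_le (Set.Finite.bddBelow (Set.finite_range μ)) i
  -- nonnegativity of the base W
  set W : ℝ := δ * Psi m μ (-x) + Psi m μ x + (m : ℝ) / ⨅ i, μ i with hWdef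
  have hW : 0 ≤ W := by
    have hterm2 : ∀ i : Fin m, (-1) / (⨅ j, μ j) ≤ (δ * psi (-(x i)) + psi (x i)) / μ i := by
      intro i
      have h1 := psi_ge (-(x i)); have h2 := psi_ge (x i)
      have hS : -1 ≤ δ * psi (-(x i)) + psi (x i) := by nlinarith
      rw [div_le_div_iff₀ hc (hμ i)]
      nlinarith [mul_nonneg (by linarith : (0:ℝ) ≤ δ * psi (-(x i)) + psi (x i) + 1) hc.le,
        hcle i]
    have hge : ∑ i : Fin m, ((-1) / (⨅ j, μ j)) ≤ ∑ i, (δ * psi (-(x i)) + psi (x i)) / μ i :=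
      Finset.sum_le_sum fun i _ => hterm2 i
    have hconst : ∑ _i : Fin m, ((-1) / (⨅ j, μ j)) = -((m : ℝ) / ⨅ j, μ j) := by
      rw [Finset.sum_const, Finset.card_univ, Fintype.card_fin, nsmul_eq_mul]
      ring
    rw [hWdef, sum_rep]
    rw [hconst] at hge
    linarith
  have hWp : 0 ≤ W ^ (p - 1) := Real.rpow_nonneg hW _
  -- compute the derivative
  have hd := hasFDerivAt_Vp m μ δ p hp.le x
  rw [hd.fderiv]
  simp only [ContinuousLinearMap.smul_apply, ContinuousLinearMap.coe_sum',
    Finset.sum_apply, ContinuousLinearMap.proj_apply, smul_eq_mul]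
  -- simplify the drift on K₋
  have hmax : max (∑ j, x j) 0 = 0 := max_eq_right hx
  have hterm : ∀ i : Fin m, ((δ * (-psi' (-(x i))) + psi' (x i)) / μ i) * (drift m μ γ β x u i)
      = -(β / (m:ℝ) + x i) * (psi' (x i) - δ * psi' (-(x i))) := by
    intro i
    have : drift m μ γ β x u i = -(β / (m:ℝ)) * μ i - μ i * x i := by
      simp [drift, hmax]
    rw [this]
    have := (hμ i).ne'
    field_simp
    ring
  have hsumle : ∑ i, -(β / (m:ℝ) + x i) * (psi' (x i) - δ * psi' (-(x i)))
      ≤ δ * β + (m : ℝ) / 2 * (1 + δ) - δ * ∑ i, |x i| := by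
    have h1 : ∀ i : Fin m, -(β / (m:ℝ) + x i) * (psi' (x i) - δ * psi' (-(x i)))
        ≤ δ * (β / (m:ℝ)) + (1+δ)/2 - δ * |x i| :=
      fun i => key δ (β / (m:ℝ)) (x i) hδ0.le hδ1 (by positivity)
    calc ∑ i, -(β / (m:ℝ) + x i) * (psi' (x i) - δ * psi' (-(x i)))
        ≤ ∑ i : Fin m, (δ * (β / (m:ℝ)) + (1+δ)/2 - δ * |x i|) :=
          Finset.sum_le_sum fun i _ => h1 i
      _ = δ * β + (m : ℝ) / 2 * (1 + δ) - δ * ∑ i, |x i| := by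
          rw [Finset.sum_sub_distrib, Finset.sum_const, Finset.card_univ, Fintype.card_fin,
            nsmul_eq_mul, ← Finset.mul_sum]
          field_simp
  -- conclude
  have hVp1 : Vp m μ δ (p - 1) x = W ^ (p - 1) := rfl
  calc (p * W ^ (p-1)) * ∑ i, ((δ * (-psi' (-(x i))) + psi' (x i)) / μ i) * (drift m μ γ β x u i)
      = (p * W ^ (p-1)) * ∑ i, -(β / (m:ℝ) + x i) * (psi' (x i) - δ * psi' (-(x i))) := by
        rw [Finset.sum_congr rfl (fun i _ => hterm i)]
    _ ≤ (p * W ^ (p-1)) * (δ * β + (m : ℝ) / 2 * (1 + δ) - δ * ∑ i, |x i|) :=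
        mul_le_mul_of_nonneg_left hsumle (mul_nonneg (by linarith) hWp)
    _ = p * (δ * β + (m : ℝ) / 2 * (1 + δ) - δ * ∑ i, |x i|) * Vp m μ δ (p - 1) x := by
        rw [hVp1]; ring

end
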